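/- Let a < b be real numbers, let f : [a,b] → ℝ be twice differentiable with real constants m and M such that m ≤ f''(x) ≤ M for all x ∈ [a,b], and let g : [a,b] → ℝ be integrable, nonnegative, and symmetric about (a+b)/2 (i.e. g(x) = g(a+b−x) for all x ∈ [a,b]). Then (m/2)·∫_a^b (t−a)(b−t)g(t) dt ≤ ((f(a)+f(b))/2)·∫_a^b g(t) dt − ∫_a^b f(t)g(t) dt ≤ (M/2)·∫_a^b (t−a)(b−t)g(t) dt. -/

import Mathlib

open MeasureTheory intervalIntegral

lemma secant_aux {a b : ℝ} (hab : a < b) {φ : ℝ → ℝ}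
    (hc : ConvexOn ℝ (Set.Icc a b) φ) {t : ℝ} (ht : t ∈ Set.Icc a b) :
    (b - a) * φ t ≤ (b - t) * φ a + (t - a) * φ b := by
  have hba : (0:ℝ) < b - a := by linarith
  have hne : b - a ≠ 0 := hba.ne'
  have hw1 : (0:ℝ) ≤ (b - t) / (b - a) := div_nonneg (by linarith [ht.2]) hba.le
  have hw2 : (0:ℝ) ≤ (t - a) / (b - a) := div_nonneg (by linarith [ht.1]) hba.le
  have hw3 : (b - t) / (b - a) + (t - a) / (b - a) = 1 := by field_simp; ring
  have h := hc.2 (Set.left_mem_Icc.2 hab.le) (Set.right_mem_Icc.2 hab.le) hw1 hw2 hw3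
  simp only [smul_eq_mul] at h
  have hx : (b - t) / (b - a) * a + (t - a) / (b - a) * b = t := by field_simp; ring
  rw [hx] at h
  calc (b - a) * φ t
      ≤ (b - a) * ((b - t) / (b - a) * φ a + (t - a) / (b - a) * φ b) :=
        mul_le_mul_of_nonneg_left h hba.le
    _ = (b - t) * φ a + (t - a) * φ b := by field_simp

theorem fejer_stmt_2 (a b : ℝ) (hab : a < b) (f f' f'' g : ℝ → ℝ) (m M : ℝ)
    (hf' : ∀ x ∈ Set.Icc a b, HasDerivWithinAt f (f' x) (Set.Icc a b) x)
    (hf'' : ∀ x ∈ Set.Icc a b, HasDerivWithinAt f' (f'' x) (Set.Icc a b) x)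
    (hm : ∀ x ∈ Set.Icc a b, m ≤ f'' x)
    (hM : ∀ x ∈ Set.Icc a b, f'' x ≤ M)
    (hg : IntervalIntegrable g volume a b)
    (hg0 : ∀ x ∈ Set.Icc a b, 0 ≤ g x)
    (hgsymm : ∀ x ∈ Set.Icc a b, g x = g (a + b - x)) :
    m / 2 * ∫ t in a..b, (t - a) * (b - t) * g t
        ≤ (f a + f b) / 2 * (∫ t in a..b, g t) - ∫ t in a..b, f t * g t ∧
    (f a + f b) / 2 * (∫ t in a..b, g t) - (∫ t in a..b, f t * g t)
        ≤ M / 2 * ∫ t in a..b, (t - a) * (b - t) * g t := by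
  have hba : (0:ℝ) < b - a := by linarith
  set L : ℝ → ℝ := fun t => ((b - t) * f a + (t - a) * f b) / (b - a) with hL
  have hfc : ContinuousOn f (Set.Icc a b) :=
    fun x hx => (hf' x hx).continuousWithinAt
  -- convexity of f - m/2 x^2
  have hIoo : interior (Set.Icc a b) = Set.Ioo a b := interior_Icc
  have sub : Set.Ioo a b ⊆ Set.Icc a b := Set.Ioo_subset_Icc_self
  have hconv1 : ConvexOn ℝ (Set.Icc a b) (fun x => f x - m / 2 * x ^ 2) := by
    apply convexOn_of_hasDerivWithinAt2_nonneg (convex_Icc a b)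
      (f' := fun x => f' x - m * x) (f'' := fun x => f'' x - m)
    · exact hfc.sub (by fun_prop)
    · intro x hx
      rw [hIoo] at hx ⊢
      have h1 : HasDerivWithinAt (fun x : ℝ => m / 2 * x ^ 2) (m * x) (Set.Ioo a b) x := by
        have := ((hasDerivAt_pow 2 x).const_mul (m / 2)).hasDerivWithinAt
          (s := Set.Ioo a b)
        exact this.congr_deriv (by ring)
      exact (((hf' x (sub hx)).mono sub).sub h1)
    · intro x hx
      rw [hIoo] at hx ⊢
      have h1 : HasDerivWithinAt (fun x : ℝ => m * x) m (Set.Ioo a b) x := by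
        simpa using ((hasDerivAt_id x).const_mul m).hasDerivWithinAt (s := Set.Ioo a b)
      exact (((hf'' x (sub hx)).mono sub).sub h1)
    · intro x hx
      rw [hIoo] at hx
      have := hm x (sub hx); linarith
  have hconv2 : ConvexOn ℝ (Set.Icc a b) (fun x => M / 2 * x ^ 2 - f x) := by
    apply convexOn_of_hasDerivWithinAt2_nonneg (convex_Icc a b)
      (f' := fun x => M * x - f' x) (f'' := fun x => M - f'' x)
    · exact ContinuousOn.sub (by fun_prop) hfc
    · intro x hx
      rw [hIoo] at hx ⊢
      have h1 : HasDerivWithinAt (fun x : ℝ => M / 2 * x ^ 2) (M * x) (Set.Ioo a b) x := by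
        have := ((hasDerivAt_pow 2 x).const_mul (M / 2)).hasDerivWithinAt
          (s := Set.Ioo a b)
        exact this.congr_deriv (by ring)
      exact h1.sub ((hf' x (sub hx)).mono sub)
    · intro x hx
      rw [hIoo] at hx ⊢
      have h1 : HasDerivWithinAt (fun x : ℝ => M * x) M (Set.Ioo a b) x := by
        simpa using ((hasDerivAt_id x).const_mul M).hasDerivWithinAt (s := Set.Ioo a b)
      exact h1.sub ((hf'' x (sub hx)).mono sub)
    · intro x hx
      rw [hIoo] at hx
      have := hM x (sub hx); linarith
  -- pointwise bounds
  have hpt1 : ∀ t ∈ Set.Icc a b, m / 2 * ((t - a) * (b - t)) ≤ L t - f t := by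
    intro t ht
    have h := secant_aux hab hconv1 ht
    have hLt : (b - a) * L t = (b - t) * f a + (t - a) * f b := by
      rw [hL]; field_simp
    nlinarith [ht.1, ht.2]
  have hpt2 : ∀ t ∈ Set.Icc a b, L t - f t ≤ M / 2 * ((t - a) * (b - t)) := by
    intro t ht
    have h := secant_aux hab hconv2 ht
    have hLt : (b - a) * L t = (b - t) * f a + (t - a) * f b := by
      rw [hL]; field_simp
    nlinarith [ht.1, ht.2]
  -- integrability
  have huIcc : Set.uIcc a b = Set.Icc a b := Set.uIcc_of_le hab.le
  have hfg : IntervalIntegrable (fun t => f t * g t) volume a b :=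
    hg.continuousOn_mul (by rw [huIcc]; exact hfc)
  have hLc : ContinuousOn L (Set.Icc a b) := by
    apply ContinuousOn.div_const
    exact ((continuousOn_const.sub continuousOn_id).mul continuousOn_const).add
      ((continuousOn_id.sub continuousOn_const).mul continuousOn_const)
  have hLg : IntervalIntegrable (fun t => L t * g t) volume a b :=
    hg.continuousOn_mul (by rw [huIcc]; exact hLc)
  have hLfg : IntervalIntegrable (fun t => (L t - f t) * g t) volume a b := by
    have := hLg.sub hfg
    apply this.congr
    intro t _; simp [sub_mul]
  have hquad : IntervalIntegrable (fun t => (t - a) * (b - t) * g t) volume a b :=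
    hg.continuousOn_mul (by rw [huIcc]; fun_prop)
  have hquadm : IntervalIntegrable (fun t => m / 2 * ((t - a) * (b - t)) * g t) volume a b :=
    hg.continuousOn_mul (by rw [huIcc]; fun_prop)
  have hquadM : IntervalIntegrable (fun t => M / 2 * ((t - a) * (b - t)) * g t) volume a b :=
    hg.continuousOn_mul (by rw [huIcc]; fun_prop)
  -- symmetry: ∫ L g = (f a + f b)/2 * ∫ g
  have hsym : ∫ t in a..b, L t * g t = (f a + f b) / 2 * ∫ t in a..b, g t := by
    have h1 : (∫ t in a..b, L (a + b - t) * g (a + b - t)) = ∫ t in a..b, L t * g t := by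
      have := intervalIntegral.integral_comp_sub_left (fun t => L t * g t) (a + b)
        (a := a) (b := b)
      simpa using this
    have h2 : (∫ t in a..b, L (a + b - t) * g (a + b - t))
        = ∫ t in a..b, L (a + b - t) * g t := by
      apply intervalIntegral.integral_congr
      intro t ht
      rw [huIcc] at ht
      show L (a + b - t) * g (a + b - t) = L (a + b - t) * g t
      rw [← hgsymm t ht]
    have h3 : (∫ t in a..b, L (a + b - t) * g t) + (∫ t in a..b, L t * g t)
        = ∫ t in a..b, (f a + f b) * g t := by
      rw [← intervalIntegral.integral_add ?_ hLg]
      · apply intervalIntegral.integral_congr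
        intro t ht
        have : L (a + b - t) + L t = f a + f b := by
          rw [hL]; field_simp; ring
        simp only []
        rw [← add_mul, this]
      · apply hg.continuousOn_mul
        rw [huIcc]
        apply hLc.comp (by fun_prop)
        intro x hx
        constructor <;> [linarith [hx.2]; linarith [hx.1]]
    rw [h2] at h1
    rw [intervalIntegral.integral_const_mul] at h3
    rw [h1] at h3
    linarith
  -- integral bounds
  have hmono1 : (∫ t in a..b, m / 2 * ((t - a) * (b - t)) * g t)
      ≤ ∫ t in a..b, (L t - f t) * g t := by
    apply intervalIntegral.integral_mono_on hab.le hquadm hLfg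
    intro t ht
    exact mul_le_mul_of_nonneg_right (hpt1 t ht) (hg0 t ht)
  have hmono2 : (∫ t in a..b, (L t - f t) * g t)
      ≤ ∫ t in a..b, M / 2 * ((t - a) * (b - t)) * g t := by
    apply intervalIntegral.integral_mono_on hab.le hLfg hquadM
    intro t ht
    exact mul_le_mul_of_nonneg_right (hpt2 t ht) (hg0 t ht)
  have hsplit : (∫ t in a..b, (L t - f t) * g t)
      = (f a + f b) / 2 * (∫ t in a..b, g t) - ∫ t in a..b, f t * g t := by
    have : (∫ t in a..b, (L t - f t) * g t)
        = (∫ t in a..b, L t * g t) - ∫ t in a..b, f t * g t := by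
      rw [← intervalIntegral.integral_sub hLg hfg]
      apply intervalIntegral.integral_congr
      intro t _; simp [sub_mul]
    rw [this, hsym]
  have heqm : (∫ t in a..b, m / 2 * ((t - a) * (b - t)) * g t)
      = m / 2 * ∫ t in a..b, (t - a) * (b - t) * g t := by
    rw [← intervalIntegral.integral_const_mul]
    apply intervalIntegral.integral_congr
    intro t _; ring
  have heqM : (∫ t in a..b, M / 2 * ((t - a) * (b - t)) * g t)
      = M / 2 * ∫ t in a..b, (t - a) * (b - t) * g t := by
    rw [← intervalIntegral.integral_const_mul]
    apply intervalIntegral.integral_congr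
    intro t _; ring
  constructor
  · rw [← hsplit, ← heqm]; exact hmono1
  · rw [← hsplit, ← heqM]; exact hmono2
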